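/- arXiv:1712.07568 — 2 statements merged into one kernel-verified Lean document; each statement's English description precedes it below -/
import Mathlib

section
/- Let p ∈ (0,1), α₁, α₂ ∈ ℝ, and c ∈ (0,1). Define λ(c) = A/(1+A) where A = (p/(1−p))·exp(α₁c + (α₂/2)c²), and define φ''(c) = α₁ + α₂c − 1/(c(1−c)). Suppose λ(c) = c. Then λ'(c) = c(1−c)(α₁ + α₂c), and consequently: φ''(c) > 0 ⟺ λ'(c) > 1, φ''(c) < 0 ⟺ λ'(c) < 1, and φ''(c) = 0 ⟺ λ'(c) = 1. -/
open Real Set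

theorem stmt_4 (p α₁ α₂ : ℝ) (hp : p ∈ Ioo (0 : ℝ) 1)
    (A lam : ℝ → ℝ)
    (hA : ∀ c, A c = p / (1 - p) * Real.exp (α₁ * c + α₂ / 2 * c ^ 2))
    (hlam : ∀ c, lam c = A c / (1 + A c))
    (c : ℝ) (hc : c ∈ Ioo (0 : ℝ) 1) (hfix : lam c = c) :
    HasDerivAt lam (c * (1 - c) * (α₁ + α₂ * c)) c ∧
    (α₁ + α₂ * c - 1 / (c * (1 - c)) > 0 ↔ c * (1 - c) * (α₁ + α₂ * c) > 1) ∧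
    (α₁ + α₂ * c - 1 / (c * (1 - c)) < 0 ↔ c * (1 - c) * (α₁ + α₂ * c) < 1) ∧
    (α₁ + α₂ * c - 1 / (c * (1 - c)) = 0 ↔ c * (1 - c) * (α₁ + α₂ * c) = 1) := by
  obtain ⟨hp0, hp1⟩ := hp
  obtain ⟨hc0, hc1⟩ := hc
  have hc1' : (0:ℝ) < 1 - c := by linarith
  have hk : 0 < p / (1 - p) := div_pos hp0 (by linarith)
  have hApos : ∀ x, 0 < A x := by
    intro x; rw [hA x]; positivity
  have hAne : (1 : ℝ) + A c ≠ 0 := by have := hApos c; linarith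
  -- A c = c / (1 - c)
  have hfix' : A c / (1 + A c) = c := by rw [← hlam c]; exact hfix
  have hAc : A c = c / (1 - c) := by
    have h1 : A c = c * (1 + A c) := by
      field_simp at hfix'; linarith [hfix']
    field_simp
    nlinarith [h1]
  have hg : HasDerivAt (fun x => α₁ * x + α₂ / 2 * x ^ 2) (α₁ + α₂ * c) c := by
    have h1 : HasDerivAt (fun x : ℝ => α₁ * x) α₁ c := by
      simpa using (hasDerivAt_id c).const_mul α₁
    have h2 : HasDerivAt (fun x : ℝ => α₂ / 2 * x ^ 2) (α₂ / 2 * (2 * c)) c := by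
      simpa using (hasDerivAt_pow 2 c).const_mul (α₂ / 2)
    have := h1.add h2
    exact this.congr_deriv (by ring)
  have hAder : HasDerivAt A (A c * (α₁ + α₂ * c)) c := by
    have h0 : HasDerivAt (fun x => p / (1 - p) * Real.exp (α₁ * x + α₂ / 2 * x ^ 2))
        (p / (1 - p) * Real.exp (α₁ * c + α₂ / 2 * c ^ 2) * (α₁ + α₂ * c)) c := by
      simpa [mul_assoc] using (hg.exp).const_mul (p / (1 - p))
    have heq : A = fun x => p / (1 - p) * Real.exp (α₁ * x + α₂ / 2 * x ^ 2) :=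
      funext hA
    rw [hA c, heq]
    exact h0
  have hlamder : HasDerivAt lam (c * (1 - c) * (α₁ + α₂ * c)) c := by
    have hden : HasDerivAt (fun x => 1 + A x) (A c * (α₁ + α₂ * c)) c := by
      exact ((hasDerivAt_const c 1).add hAder).congr_deriv (by simp)
    have := hAder.div hden hAne
    have heq : lam = fun x => A x / (1 + A x) := funext hlam
    rw [heq]
    refine this.congr_deriv ?_
    rw [hAc]
    have h1 : (1:ℝ) - c ≠ 0 := by linarith
    field_simp
    ring
  refine ⟨hlamder, ?_, ?_, ?_⟩
  · constructor <;> intro h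
    · have h1 : c * (1 - c) * (1 / (c * (1 - c))) = 1 := by field_simp
      nlinarith [mul_pos hc0 hc1']
    · have h1 : c * (1 - c) * (1 / (c * (1 - c))) = 1 := by field_simp
      nlinarith [mul_pos hc0 hc1']
  · constructor <;> intro h
    · have h1 : c * (1 - c) * (1 / (c * (1 - c))) = 1 := by field_simp
      nlinarith [mul_pos hc0 hc1']
    · have h1 : c * (1 - c) * (1 / (c * (1 - c))) = 1 := by field_simp
      nlinarith [mul_pos hc0 hc1']
  · constructor <;> intro h
    · have h1 : c * (1 - c) * (1 / (c * (1 - c))) = 1 := by field_simp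
      nlinarith [mul_pos hc0 hc1']
    · have h1 : c * (1 - c) * (1 / (c * (1 - c))) = 1 := by field_simp
      have h2 : c * (1 - c) ≠ 0 := by positivity
      have : c * (1 - c) * (α₁ + α₂ * c - 1 / (c * (1 - c))) = 0 := by
        rw [mul_sub, h1, h]; ring
      rcases mul_eq_zero.mp this with h3 | h3
      · exact absurd h3 h2
      · exact h3
end

section
/- Let α₂ ∈ ℝ and c̄ ∈ (0,1) satisfy α₂ = (2c̄−1)/(c̄²(1−c̄)²). Define n(c) = 1/(1−c) − log(c/(1−c)) + ((1−2c̄)/(2c̄²(1−c̄)²))·c² for c ∈ (0,1). Then n'(c) = c·((1−2c̄)/(c̄²(1−c̄)²) − (1−2c)/(c²(1−c)²)); hence n is strictly decreasing on (0, c̄), strictly increasing on (c̄, 1), and attains its global minimum over (0,1) at c̄, with n(c̄) = 1/(1−c̄) − log(c̄/(1−c̄)) + (1−2c̄)/(2(1−c̄)²). -/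
open Real Set

lemma Qpos (b c : ℝ) (hb0 : 0 < b) (hb1 : b < 1) (hc0 : 0 < c) (hc1 : c < 1) :
    0 < b*(1-b)^2 + c*(1-c)^2 - 4*b*c + 5*b*c*(b+c) - 2*b*c*(b^2+c^2) - 2*b^2*c^2 := by
  nlinarith [mul_pos hb0 hc0, sq_nonneg (b-c), mul_nonneg (mul_pos hb0 hc0).le (sq_nonneg (b+c-1)), mul_pos (mul_pos hb0 hc0) (mul_pos (sub_pos.2 hb1) (sub_pos.2 hc1)), mul_pos hb0 (sub_pos.2 hb1), mul_pos hc0 (sub_pos.2 hc1), mul_nonneg (mul_pos hb0 hc0).le (sq_nonneg (b-c))]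

-- difference of F(b) - F(c), F(x) = (1-2x)/(x^2(1-x)^2)
lemma Fdiff (b c : ℝ) (hb0 : 0 < b) (hb1 : b < 1) (hc0 : 0 < c) (hc1 : c < 1) :
    (1 - 2*b)/(b^2*(1-b)^2) - (1 - 2*c)/(c^2*(1-c)^2)
      = (c - b) * (b*(1-b)^2 + c*(1-c)^2 - 4*b*c + 5*b*c*(b+c) - 2*b*c*(b^2+c^2) - 2*b^2*c^2)
        / (b^2*(1-b)^2 * (c^2*(1-c)^2)) := by
  have h1 : b ≠ 0 := hb0.ne'
  have h2 : (1:ℝ) - b ≠ 0 := by linarith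
  have h3 : c ≠ 0 := hc0.ne'
  have h4 : (1:ℝ) - c ≠ 0 := by linarith
  field_simp
  ring

lemma Fneg (b c : ℝ) (hb0 : 0 < b) (hb1 : b < 1) (hc0 : 0 < c) (hcb : c < b) :
    (1 - 2*b)/(b^2*(1-b)^2) - (1 - 2*c)/(c^2*(1-c)^2) < 0 := by
  have hc1 : c < 1 := hcb.trans hb1
  rw [Fdiff b c hb0 hb1 hc0 hc1]
  apply div_neg_of_neg_of_pos
  · exact mul_neg_of_neg_of_pos (by linarith) (Qpos b c hb0 hb1 hc0 hc1)
  · exact mul_pos (mul_pos (pow_pos hb0 2) (pow_pos (by linarith : (0:ℝ) < 1 - b) 2))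
      (mul_pos (pow_pos hc0 2) (pow_pos (by linarith : (0:ℝ) < 1 - c) 2))

lemma Fpos (b c : ℝ) (hb0 : 0 < b) (hc1 : c < 1) (hbc : b < c) :
    0 < (1 - 2*b)/(b^2*(1-b)^2) - (1 - 2*c)/(c^2*(1-c)^2) := by
  have hb1 : b < 1 := hbc.trans hc1
  have hc0 : 0 < c := hb0.trans hbc
  rw [Fdiff b c hb0 hb1 hc0 hc1]
  apply div_pos
  · exact mul_pos (by linarith) (Qpos b c hb0 hb1 hc0 hc1)
  · exact mul_pos (mul_pos (pow_pos hb0 2) (pow_pos (by linarith : (0:ℝ) < 1 - b) 2))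
      (mul_pos (pow_pos hc0 2) (pow_pos (by linarith : (0:ℝ) < 1 - c) 2))

theorem stmt_13 (α₂ cbar : ℝ) (hcbar : cbar ∈ Ioo (0 : ℝ) 1)
    (hα₂ : α₂ = (2 * cbar - 1) / (cbar ^ 2 * (1 - cbar) ^ 2))
    (nfun : ℝ → ℝ)
    (hn : ∀ c, nfun c = 1 / (1 - c) - Real.log (c / (1 - c)) +
      (1 - 2 * cbar) / (2 * cbar ^ 2 * (1 - cbar) ^ 2) * c ^ 2) :
    (∀ c ∈ Ioo (0 : ℝ) 1, HasDerivAt nfun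
      (c * ((1 - 2 * cbar) / (cbar ^ 2 * (1 - cbar) ^ 2) -
        (1 - 2 * c) / (c ^ 2 * (1 - c) ^ 2))) c) ∧
    StrictAntiOn nfun (Ioc (0 : ℝ) cbar) ∧
    StrictMonoOn nfun (Ico cbar (1 : ℝ)) ∧
    (∀ c ∈ Ioo (0 : ℝ) 1, nfun cbar ≤ nfun c) ∧
    nfun cbar = 1 / (1 - cbar) - Real.log (cbar / (1 - cbar)) +
      (1 - 2 * cbar) / (2 * (1 - cbar) ^ 2) := by
  obtain ⟨hb0, hb1⟩ := hcbar
  have hb1' : (1:ℝ) - cbar > 0 := by linarith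
  set K : ℝ := (1 - 2 * cbar) / (2 * cbar ^ 2 * (1 - cbar) ^ 2) with hK
  -- derivative
  have hderiv : ∀ c ∈ Ioo (0 : ℝ) 1, HasDerivAt nfun
      (c * ((1 - 2 * cbar) / (cbar ^ 2 * (1 - cbar) ^ 2) -
        (1 - 2 * c) / (c ^ 2 * (1 - c) ^ 2))) c := by
    intro c hc
    obtain ⟨hc0, hc1⟩ := hc
    have hc1' : (0:ℝ) < 1 - c := by linarith
    have hcne : c ≠ 0 := hc0.ne'
    have h1cne : (1:ℝ) - c ≠ 0 := hc1'.ne'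
    -- the nice function
    have heq : nfun =ᶠ[nhds c] fun x => 1 / (1 - x) - (Real.log x - Real.log (1 - x)) + K * x ^ 2 := by
      have : Ioo (0:ℝ) 1 ∈ nhds c := isOpen_Ioo.mem_nhds ⟨hc0, hc1⟩
      filter_upwards [this] with x hx
      rw [hn x, Real.log_div hx.1.ne' (by linarith [hx.2])]
    have h1 : HasDerivAt (fun x : ℝ => 1 / (1 - x)) (1 / (1 - c) ^ 2) c := by
      have := ((hasDerivAt_id c).const_sub 1).inv h1cne
      simpa [one_div, Pi.inv_def] using this.congr_deriv (by simp only [id_eq]; field_simp)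
    have h2 : HasDerivAt (fun x : ℝ => Real.log x) (1 / c) c := by
      simpa [one_div] using Real.hasDerivAt_log hcne
    have h3 : HasDerivAt (fun x : ℝ => Real.log (1 - x)) (-(1 / (1 - c))) c := by
      have := (Real.hasDerivAt_log h1cne).comp c ((hasDerivAt_id c).const_sub 1)
      simpa [one_div, Function.comp_def] using this.congr_deriv (by field_simp)
    have h4 : HasDerivAt (fun x : ℝ => K * x ^ 2) (K * (2 * c)) c := by
      have := (hasDerivAt_pow 2 c).const_mul K
      simpa using this.congr_deriv (by ring)
    have hg : HasDerivAt (fun x => 1 / (1 - x) - (Real.log x - Real.log (1 - x)) + K * x ^ 2)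
        (1 / (1 - c) ^ 2 - (1 / c - -(1 / (1 - c))) + K * (2 * c)) c :=
      (h1.sub (h2.sub h3)).add h4
    have := hg.congr_of_eventuallyEq heq
    apply this.congr_deriv
    rw [hK]
    field_simp
    ring
  have hderiv' : ∀ c ∈ Ioo (0 : ℝ) 1, deriv nfun c =
      c * ((1 - 2 * cbar) / (cbar ^ 2 * (1 - cbar) ^ 2) -
        (1 - 2 * c) / (c ^ 2 * (1 - c) ^ 2)) := fun c hc => (hderiv c hc).deriv
  have hcont : ∀ s ⊆ Ioo (0:ℝ) 1, ContinuousOn nfun s := by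
    intro s hs x hx
    exact ((hderiv x (hs hx)).continuousAt).continuousWithinAt
  have hanti : StrictAntiOn nfun (Ioc (0 : ℝ) cbar) := by
    apply strictAntiOn_of_deriv_neg (convex_Ioc 0 cbar)
      (hcont _ (fun x hx => ⟨hx.1, hx.2.trans_lt hb1⟩))
    intro x hx
    rw [interior_Ioc] at hx
    have hx1 : x < 1 := hx.2.trans hb1
    rw [hderiv' x ⟨hx.1, hx1⟩]
    exact mul_neg_of_pos_of_neg hx.1 (Fneg cbar x hb0 hb1 hx.1 hx.2)
  have hmono : StrictMonoOn nfun (Ico cbar (1 : ℝ)) := by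
    apply strictMonoOn_of_deriv_pos (convex_Ico cbar 1)
      (hcont _ (fun x hx => ⟨hb0.trans_le hx.1, hx.2⟩))
    intro x hx
    rw [interior_Ico] at hx
    have hx0 : 0 < x := hb0.trans hx.1
    rw [hderiv' x ⟨hx0, hx.2⟩]
    exact mul_pos hx0 (Fpos cbar x hb0 hx.2 hx.1)
  refine ⟨hderiv, hanti, hmono, ?_, ?_⟩
  · intro c hc
    rcases lt_trichotomy c cbar with h | h | h
    · exact (hanti ⟨hc.1, le_of_lt h⟩ ⟨hb0, le_refl _⟩ h).le
    · rw [h]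
    · exact (hmono ⟨le_refl _, hb1⟩ ⟨le_of_lt h, hc.2⟩ h).le
  · rw [hn cbar]
    have : (1 - 2 * cbar) / (2 * cbar ^ 2 * (1 - cbar) ^ 2) * cbar ^ 2
        = (1 - 2 * cbar) / (2 * (1 - cbar) ^ 2) := by
      field_simp
    rw [this]
end
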